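/- Let a, b be reals with b > a ≥ 0 and L ≥ 1 an integer. For λ = (λ₁, …, λ_L) with λ_k ≥ 0 and ∑ λ_k = 1, define R(λ) = ∑_{k=1}^L λ_k·((∑_{j<k} λ_j)·b + (1 − ∑_{j<k} λ_j)·a). Then R is maximized over the simplex uniquely at λ_k = 1/L for all k, where R = ((L+1)/(2L))·a + ((L−1)/(2L))·b. -/

import Mathlib

theorem stmt8 (a b : ℝ) (ha : 0 ≤ a) (hab : a < b) (L : ℕ) (hL : 1 ≤ L)
    (lam : ℕ → ℝ) (hnonneg : ∀ k ∈ Finset.Icc 1 L, 0 ≤ lam k)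
    (hsum : ∑ k ∈ Finset.Icc 1 L, lam k = 1) :
    (∑ k ∈ Finset.Icc 1 L, lam k *
        ((∑ j ∈ Finset.Ico 1 k, lam j) * b + (1 - ∑ j ∈ Finset.Ico 1 k, lam j) * a))
      ≤ (((L : ℝ) + 1) / (2 * L)) * a + (((L : ℝ) - 1) / (2 * L)) * b ∧
    ((∑ k ∈ Finset.Icc 1 L, lam k *
        ((∑ j ∈ Finset.Ico 1 k, lam j) * b + (1 - ∑ j ∈ Finset.Ico 1 k, lam j) * a))
      = (((L : ℝ) + 1) / (2 * L)) * a + (((L : ℝ) - 1) / (2 * L)) * b →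
      ∀ k ∈ Finset.Icc 1 L, lam k = 1 / L) := by
  have hn : (0:ℝ) < (L:ℝ) := by exact_mod_cast Nat.lt_of_lt_of_le Nat.zero_lt_one hL
  have hn0 : (L:ℝ) ≠ 0 := ne_of_gt hn
  set f : ℝ := ∑ k ∈ Finset.Icc 1 L, lam k * ∑ j ∈ Finset.Ico 1 k, lam j with hf
  set g : ℝ := ∑ k ∈ Finset.Icc 1 L, (lam k)^2 with hg
  set T : ℝ := ∑ k ∈ Finset.Icc 1 L, (lam k - 1/(L:ℝ))^2 with hT
  -- key identity: 2f + g = (∑λ)² = 1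
  have key : ∀ n : ℕ,
      2 * (∑ k ∈ Finset.Icc 1 n, lam k * ∑ j ∈ Finset.Ico 1 k, lam j)
        + ∑ k ∈ Finset.Icc 1 n, (lam k)^2
      = (∑ k ∈ Finset.Icc 1 n, lam k)^2 := by
    intro n
    induction n with
    | zero => simp
    | succ m ih =>
      have hins : Finset.Icc 1 (m+1) = insert (m+1) (Finset.Icc 1 m) := by
        ext x; simp [Nat.lt_succ_iff]; omega
      have hnot : (m+1) ∉ Finset.Icc 1 m := by simp
      rw [hins, Finset.sum_insert hnot, Finset.sum_insert hnot, Finset.sum_insert hnot,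
        Finset.Ico_add_one_right_eq_Icc]
      linear_combination ih
  have hkey : 2 * f + g = 1 := by
    have := key L; rw [hsum] at this; rw [hf, hg]; linarith [this]
  -- T = g - 1/L
  have hTg : T = g - 1/(L:ℝ) := by
    have hcard : (Finset.Icc 1 L).card = L := by rw [Nat.card_Icc]; omega
    have expand : ∀ k ∈ Finset.Icc 1 L,
        (lam k - 1/(L:ℝ))^2 = (lam k)^2 - (2/(L:ℝ)) * lam k + 1/(L:ℝ)^2 := by
      intro k _; ring
    rw [hT, Finset.sum_congr rfl expand, Finset.sum_add_distrib, Finset.sum_sub_distrib,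
      ← Finset.mul_sum, hsum, Finset.sum_const, hcard, ← hg]
    field_simp
    rw [nsmul_eq_mul, ← mul_assoc, ← pow_two, mul_one_div_cancel (pow_ne_zero 2 hn0)]; ring
  have hTnn : 0 ≤ T := Finset.sum_nonneg fun k _ => sq_nonneg _
  -- rewrite R
  have hR : (∑ k ∈ Finset.Icc 1 L, lam k *
        ((∑ j ∈ Finset.Ico 1 k, lam j) * b + (1 - ∑ j ∈ Finset.Ico 1 k, lam j) * a))
      = a + (b - a) * f := by
    have expand : ∀ k ∈ Finset.Icc 1 L,
        lam k * ((∑ j ∈ Finset.Ico 1 k, lam j) * b + (1 - ∑ j ∈ Finset.Ico 1 k, lam j) * a)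
        = lam k * a + (b - a) * (lam k * ∑ j ∈ Finset.Ico 1 k, lam j) := by
      intro k _; ring
    rw [Finset.sum_congr rfl expand, Finset.sum_add_distrib, ← Finset.sum_mul, hsum,
      ← Finset.mul_sum, ← hf, one_mul]
  have htarget : (((L : ℝ) + 1) / (2 * L)) * a + (((L : ℝ) - 1) / (2 * L)) * b
      = a + (b - a) * ((1 - 1/(L:ℝ)) / 2) := by
    field_simp
    ring
  have hRT : (∑ k ∈ Finset.Icc 1 L, lam k *
        ((∑ j ∈ Finset.Ico 1 k, lam j) * b + (1 - ∑ j ∈ Finset.Ico 1 k, lam j) * a))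
      = (((L : ℝ) + 1) / (2 * L)) * a + (((L : ℝ) - 1) / (2 * L)) * b - (b - a) * T / 2 := by
    rw [hR, htarget]; linear_combination ((b-a)/2)*hkey + ((b-a)/2)*hTg
  constructor
  · rw [hRT]; nlinarith [hTnn, hab]
  · intro heq k hk
    rw [hRT] at heq
    have hT0 : T = 0 := by nlinarith [hab]
    have := (Finset.sum_eq_zero_iff_of_nonneg (fun k _ => sq_nonneg (lam k - 1/(L:ℝ)))).mp hT0 k hk
    have := pow_eq_zero_iff (n := 2) (by norm_num) |>.mp this
    linarith [this]
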